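/- arXiv:2501.02406 — 2 statements merged into one kernel-verified Lean document; each statement's English description precedes it below -/
import Mathlib

section
/- Let p, q be probability distributions on a finite alphabet such that q(y) ≥ ε for all y in the support of p, with 0 < ε ≤ 1/2. Let Y ~ p and Z = -log q(Y). Then E_p[exp(|Z - E_p[Z]| / t)] ≤ 2 for t = -4 log ε, i.e., Z - E_p[Z] has sub-exponential norm at most -4 log ε. -/
/-- For `Z = -log q(Y)` with `Y ~ p`, where `q(y) ≥ ε` on the support of `p`
and `0 < ε ≤ 1/2`, `E_p[exp(|Z - E_p Z| / (-4 log ε))] ≤ 2`. -/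
theorem subexp_norm_cross_log_likelihood {X : Type*} [Fintype X] (p q : X → ℝ) (ε : ℝ)
    (hp0 : ∀ y, 0 ≤ p y) (hp1 : ∑ y, p y = 1)
    (hq0 : ∀ y, 0 ≤ q y) (hq1 : ∑ y, q y = 1)
    (hε : 0 < ε) (hε1 : ε ≤ 1 / 2)
    (hfloor : ∀ y, 0 < p y → ε ≤ q y) :
    ∑ y, p y *
        Real.exp (|(-Real.log (q y)) - (-∑ z, p z * Real.log (q z))| /
          (-4 * Real.log ε)) ≤ 2 := by
  have hlog : Real.log ε < 0 := Real.log_neg hε (lt_of_le_of_lt hε1 (by norm_num))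
  set L : ℝ := -Real.log ε with hLdef
  have hLpos : 0 < L := by simp [hLdef]; linarith
  have hq_le_one : ∀ y, q y ≤ 1 := by
    intro y
    calc q y ≤ ∑ z, q z := Finset.single_le_sum (fun z _ => hq0 z) (Finset.mem_univ y)
    _ = 1 := hq1
  have hZ : ∀ y, 0 < p y → 0 ≤ -Real.log (q y) ∧ -Real.log (q y) ≤ L := by
    intro y hy
    have h1 : ε ≤ q y := hfloor y hy
    have hqpos : 0 < q y := lt_of_lt_of_le hε h1
    refine ⟨by simpa using neg_nonneg.mpr (Real.log_nonpos (le_of_lt hqpos) (hq_le_one y)), ?_⟩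
    have : Real.log ε ≤ Real.log (q y) := Real.log_le_log hε h1
    simp [hLdef]; linarith
  have hterm : ∀ z, 0 ≤ p z * (-Real.log (q z)) ∧ p z * (-Real.log (q z)) ≤ p z * L := by
    intro z
    rcases eq_or_lt_of_le (hp0 z) with h | h
    · constructor <;> simp [← h]
    · exact ⟨mul_nonneg (le_of_lt h) (hZ z h).1,
        mul_le_mul_of_nonneg_left (hZ z h).2 (le_of_lt h)⟩
  have hEeq : (-∑ z, p z * Real.log (q z)) = ∑ z, p z * (-Real.log (q z)) := by
    simp [mul_neg]
  have hE0 : 0 ≤ -∑ z, p z * Real.log (q z) := by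
    rw [hEeq]; exact Finset.sum_nonneg fun z _ => (hterm z).1
  have hEL : -∑ z, p z * Real.log (q z) ≤ L := by
    rw [hEeq]
    calc ∑ z, p z * (-Real.log (q z)) ≤ ∑ z, p z * L :=
          Finset.sum_le_sum fun z _ => (hterm z).2
    _ = L := by rw [← Finset.sum_mul, hp1, one_mul]
  have key : ∀ y, p y * Real.exp (|(-Real.log (q y)) - (-∑ z, p z * Real.log (q z))| /
      (-4 * Real.log ε)) ≤ p y * Real.exp (1/4 : ℝ) := by
    intro y
    rcases eq_or_lt_of_le (hp0 y) with h | h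
    · simp [← h]
    · apply mul_le_mul_of_nonneg_left _ (le_of_lt h)
      apply Real.exp_le_exp.mpr
      have h4L : (-4 : ℝ) * Real.log ε = 4 * L := by rw [hLdef]; ring
      rw [h4L, div_le_iff₀ (by linarith)]
      have habs : |(-Real.log (q y)) - (-∑ z, p z * Real.log (q z))| ≤ L := by
        rw [abs_le]
        have := hZ y h
        constructor <;> [linarith [this.1, hEL]; linarith [this.2, hE0]]
      linarith
  calc ∑ y, p y * Real.exp (|(-Real.log (q y)) - (-∑ z, p z * Real.log (q z))| /
        (-4 * Real.log ε)) ≤ ∑ y, p y * Real.exp (1/4 : ℝ) :=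
        Finset.sum_le_sum fun y _ => key y
  _ = Real.exp (1/4 : ℝ) := by rw [← Finset.sum_mul, hp1, one_mul]
  _ ≤ 2 := by
      have h2 : (1/4 : ℝ) ≤ Real.log 2 := by
        have := Real.log_two_gt_d9; linarith
      calc Real.exp (1/4 : ℝ) ≤ Real.exp (Real.log 2) := Real.exp_le_exp.mpr h2
      _ = 2 := Real.exp_log (by norm_num)
end

section
/- Let a sequence of tokens Y_1,…,Y_N in a finite alphabet of size K be generated sequentially by a model A, where given Y_1,…,Y_{n-1} the next token Y_n has conditional law p_n^A. Define the log-perplexity l_A = -(1/N)∑_n log p_n^A(Y_n) and the average entropy h_N(A,A) = (1/N)∑_n H(p_n^A) where H is Shannon entropy of the conditional distribution. Then there is a universal constant c_1 > 0 such that for all t > 0, P(|l_A - h_N(A,A)| ≥ t) ≤ 2 exp(-(N t/(c_1 log K)) min(1, t/(c_1 log K))). -/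
/-- Probability of the token sequence `y` under the sequential model with
history-dependent conditional laws `pA`. -/
noncomputable def seqProb {X : Type*} (pA : List X → X → ℝ) {N : ℕ}
    (y : Fin N → X) : ℝ :=
  ∏ n : Fin N, pA ((List.ofFn y).take n.val) (y n)

/-- Log-perplexity of the sequence `y` under the evaluator model `pA`. -/
noncomputable def logPerp {X : Type*} (pA : List X → X → ℝ) {N : ℕ}
    (y : Fin N → X) : ℝ :=
  -((1 : ℝ) / N) * ∑ n : Fin N, Real.log (pA ((List.ofFn y).take n.val) (y n))

/-- Shannon entropy of a distribution on a finite alphabet. -/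
noncomputable def shannonEntropy {X : Type*} [Fintype X] (q : X → ℝ) : ℝ :=
  -∑ x, q x * Real.log (q x)

/-- Average entropy `h_N(A,A)` along the sequence `y`. -/
noncomputable def avgEntropy {X : Type*} [Fintype X] (pA : List X → X → ℝ) {N : ℕ}
    (y : Fin N → X) : ℝ :=
  ((1 : ℝ) / N) * ∑ n : Fin N, shannonEntropy (pA ((List.ofFn y).take n.val))


set_option maxHeartbeats 1000000

lemma exp_quad (x : ℝ) : Real.exp x ≤ 1 + x + x^2 * Real.exp |x| := by
  rcases le_or_gt 0 x with hx | hx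
  · rw [abs_of_nonneg hx]
    have h0 : Real.exp (-x) * Real.exp x = 1 := by rw [← Real.exp_add]; simp
    have h1 := Real.add_one_le_exp (-x)
    have h2 : Real.exp x - 1 ≤ x * Real.exp x := by nlinarith [Real.exp_pos x]
    nlinarith [mul_le_mul_of_nonneg_left h2 hx, Real.exp_pos x]
  · rw [abs_of_neg hx]
    have h0 : Real.exp (-x) * Real.exp x = 1 := by rw [← Real.exp_add]; simp
    have h1 := Real.add_one_le_exp (-x)
    have h3 : (1:ℝ) ≤ Real.exp (-x) := by nlinarith
    nlinarith [Real.exp_pos x, Real.exp_pos (-x), sq_nonneg x,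
      mul_nonneg (sq_nonneg x) (le_of_lt (Real.exp_pos (-x))),
      mul_pos (Real.exp_pos x) (Real.exp_pos (-x))]


lemma sq_le_exp_quarter (u : ℝ) (hu : 0 ≤ u) : u^2 ≤ 64 * Real.exp (u/4) := by
  have h : Real.exp (u/8) * Real.exp (u/8) = Real.exp (u/4) := by
    rw [← Real.exp_add]; ring_nf
  have h1 := Real.add_one_le_exp (u/8)
  nlinarith [Real.exp_pos (u/8)]


lemma exp_quarter_le_two : Real.exp ((4:ℝ)⁻¹) ≤ 2 := by
  have h1 := Real.add_one_le_exp (-(4⁻¹:ℝ))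
  have h0 : Real.exp (-(4⁻¹:ℝ)) * Real.exp (4⁻¹:ℝ) = 1 := by rw [← Real.exp_add]; simp
  nlinarith [Real.exp_pos ((4:ℝ)⁻¹)]


lemma step_bound {X : Type} [Fintype X] (q : X → ℝ) (hq0 : ∀ x, 0 ≤ q x)
    (hq1 : ∑ x, q x = 1) (K2 : 2 ≤ Fintype.card X) (μ : ℝ)
    (hμ : |μ| ≤ 1 / (4 * (1 + Real.log (Fintype.card X)))) :
    ∑ x, q x * Real.exp (μ * (-Real.log (q x) - shannonEntropy q))
      ≤ Real.exp (200 * μ^2 * (Real.log (Fintype.card X))^2) := by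
  set K : ℝ := (Fintype.card X : ℝ) with hK
  have hK2 : (2:ℝ) ≤ K := by rw [hK]; exact_mod_cast K2
  set L : ℝ := Real.log K with hLdef
  have hlog2 : (0.6931471803 : ℝ) < Real.log 2 := Real.log_two_gt_d9
  have hL2 : Real.log 2 ≤ L := Real.log_le_log (by norm_num) hK2
  have hL0 : (0.69 : ℝ) < L := by linarith
  have hLpos : 0 < L := by linarith
  have hden : (0:ℝ) < 4 * (1 + L) := by linarith
  have hμ4 : |μ| ≤ 1/4 := by
    refine le_trans hμ ?_
    rw [div_le_div_iff₀ hden (by norm_num)]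
    nlinarith
  have hμL : |μ| * L ≤ 1/4 := by
    calc |μ| * L ≤ (1 / (4 * (1 + L))) * L :=
          mul_le_mul_of_nonneg_right hμ (le_of_lt hLpos)
      _ ≤ 1/4 := by rw [div_mul_eq_mul_div, div_le_div_iff₀ hden (by norm_num)]; nlinarith
  set H : ℝ := shannonEntropy q with hHdef
  set V : X → ℝ := fun x => -L - Real.log (q x) with hVdef
  -- each q x ≤ 1
  have hqle1 : ∀ x, q x ≤ 1 := by
    intro x
    rw [← hq1]
    exact Finset.single_le_sum (fun i _ => hq0 i) (Finset.mem_univ x)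
  -- pointwise bound
  have key : ∀ x, q x * Real.exp (μ * (-Real.log (q x) - H)) ≤
      Real.exp (μ * (L - H)) *
        (q x + μ * (q x * V x) + μ^2 * (64 * (q x * Real.exp (V x / 2)) + 2 * L^2 * q x)) := by
    intro x
    rcases eq_or_lt_of_le (hq0 x) with h0 | h0
    · simp [← h0]
    -- q x > 0
    have hsplit : μ * (-Real.log (q x) - H) = μ * (L - H) + μ * V x := by
      simp only [hVdef]; ring
    rw [hsplit, Real.exp_add]
    have hVlow : -L ≤ V x := by
      have : Real.log (q x) ≤ 0 := Real.log_nonpos (le_of_lt h0) (hqle1 x)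
      simp only [hVdef]; linarith
    have hq2 : Real.exp (μ * V x) ≤ 1 + μ * V x + μ^2 * (64 * Real.exp (V x / 2) + 2 * L^2) := by
      have h1 := exp_quad (μ * V x)
      have h2 : (μ * V x)^2 * Real.exp |μ * V x| ≤ μ^2 * (64 * Real.exp (V x / 2) + 2 * L^2) := by
        rw [abs_mul]
        rcases le_or_gt 0 (V x) with hV | hV
        · have hab : |μ| * |V x| ≤ V x / 4 := by
            rw [abs_of_nonneg hV]
            calc |μ| * V x ≤ (1/4) * V x := mul_le_mul_of_nonneg_right hμ4 hV
              _ = V x / 4 := by ring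
          have h3 : Real.exp (|μ| * |V x|) ≤ Real.exp (V x / 4) := Real.exp_le_exp.2 hab
          have h4 : (V x)^2 ≤ 64 * Real.exp (V x / 4) := sq_le_exp_quarter _ hV
          have h5 : Real.exp (V x / 4) * Real.exp (V x / 4) = Real.exp (V x / 2) := by
            rw [← Real.exp_add]; ring_nf
          have hL2sq : (0:ℝ) ≤ 2 * L^2 := by positivity
          calc (μ * V x)^2 * Real.exp (|μ| * |V x|)
              ≤ (μ * V x)^2 * Real.exp (V x / 4) := by
                exact mul_le_mul_of_nonneg_left h3 (sq_nonneg _)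
            _ = μ^2 * ((V x)^2 * Real.exp (V x / 4)) := by ring
            _ ≤ μ^2 * (64 * Real.exp (V x / 4) * Real.exp (V x / 4)) := by
                refine mul_le_mul_of_nonneg_left ?_ (sq_nonneg μ)
                exact mul_le_mul_of_nonneg_right h4 (le_of_lt (Real.exp_pos _))
            _ = μ^2 * (64 * Real.exp (V x / 2)) := by rw [mul_assoc, h5]
            _ ≤ μ^2 * (64 * Real.exp (V x / 2) + 2 * L^2) := by
                refine mul_le_mul_of_nonneg_left ?_ (sq_nonneg μ)
                linarith
        · have habs : |V x| ≤ L := by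
            rw [abs_of_neg hV]; linarith
          have hab : |μ| * |V x| ≤ (4:ℝ)⁻¹ := by
            calc |μ| * |V x| ≤ |μ| * L := mul_le_mul_of_nonneg_left habs (abs_nonneg μ)
              _ ≤ 1/4 := hμL
              _ = (4:ℝ)⁻¹ := by norm_num
          have h3 : Real.exp (|μ| * |V x|) ≤ 2 :=
            le_trans (Real.exp_le_exp.2 hab) exp_quarter_le_two
          have h4 : (V x)^2 ≤ L^2 := by nlinarith [abs_nonneg (V x), abs_of_neg hV]
          calc (μ * V x)^2 * Real.exp (|μ| * |V x|)
              ≤ (μ * V x)^2 * 2 := mul_le_mul_of_nonneg_left h3 (sq_nonneg _)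
            _ = μ^2 * (2 * (V x)^2) := by ring
            _ ≤ μ^2 * (2 * L^2) := by
                refine mul_le_mul_of_nonneg_left ?_ (sq_nonneg μ)
                linarith
            _ ≤ μ^2 * (64 * Real.exp (V x / 2) + 2 * L^2) := by
                refine mul_le_mul_of_nonneg_left ?_ (sq_nonneg μ)
                nlinarith [Real.exp_pos (V x / 2)]
      exact h1.trans (by linarith)
    calc q x * (Real.exp (μ * (L - H)) * Real.exp (μ * V x))
        ≤ q x * (Real.exp (μ * (L - H)) *
            (1 + μ * V x + μ^2 * (64 * Real.exp (V x / 2) + 2 * L^2))) := by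
          refine mul_le_mul_of_nonneg_left ?_ (hq0 x)
          exact mul_le_mul_of_nonneg_left hq2 (le_of_lt (Real.exp_pos _))
      _ = Real.exp (μ * (L - H)) *
            (q x + μ * (q x * V x) + μ^2 * (64 * (q x * Real.exp (V x / 2)) + 2 * L^2 * q x)) := by
          ring
  -- sum identities
  have hQV : ∑ x, q x * V x = H - L := by
    have e1 : ∀ x ∈ Finset.univ, q x * V x = q x * (-L) + (-(q x * Real.log (q x))) := by
      intro x _; simp only [hVdef]; ring
    rw [Finset.sum_congr rfl e1, Finset.sum_add_distrib, ← Finset.sum_mul, hq1,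
      Finset.sum_neg_distrib]
    simp only [hHdef, shannonEntropy]
    ring
  have hKpos : (0:ℝ) < K := by linarith
  have hexpL : Real.exp L = K := Real.exp_log hKpos
  have hsqrtK : Real.sqrt K = Real.exp (L / 2) := by
    have h2 : Real.exp (L / 2) ^ 2 = K := by
      rw [sq, ← Real.exp_add, ← hexpL]; ring_nf
    rw [← h2, Real.sqrt_sq (le_of_lt (Real.exp_pos _))]
  have hqexp : ∀ x, q x * Real.exp (V x / 2) = Real.sqrt (q x) / Real.sqrt K := by
    intro x
    rcases eq_or_lt_of_le (hq0 x) with h0 | h0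
    · simp [← h0]
    have hlog : Real.exp (Real.log (q x) / 2) = Real.sqrt (q x) := by
      have h3 : Real.exp (Real.log (q x) / 2) ^ 2 = q x := by
        rw [sq, ← Real.exp_add,
          show Real.log (q x) / 2 + Real.log (q x) / 2 = Real.log (q x) by ring,
          Real.exp_log h0]
      have h4 := Real.sqrt_sq (le_of_lt (Real.exp_pos (Real.log (q x) / 2)))
      rw [h3] at h4
      exact h4.symm
    have hsplit2 : V x / 2 = -(L / 2) + -(Real.log (q x) / 2) := by
      simp only [hVdef]; ring
    rw [hsplit2, Real.exp_add, Real.exp_neg, Real.exp_neg, hlog, ← hsqrtK]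
    have h4 : q x * ((Real.sqrt K)⁻¹ * (Real.sqrt (q x))⁻¹)
        = (q x / Real.sqrt (q x)) / Real.sqrt K := by ring
    rw [h4, Real.div_sqrt]
  have hS : ∑ x, q x * Real.exp (V x / 2) ≤ 1 := by
    have hsum : ∑ x, q x * Real.exp (V x / 2) = (∑ x, Real.sqrt (q x)) / Real.sqrt K := by
      rw [Finset.sum_div]
      exact Finset.sum_congr rfl fun x _ => hqexp x
    have hCS : (∑ x, Real.sqrt (q x)) ^ 2 ≤ K := by
      have h5 := Finset.sum_mul_sq_le_sq_mul_sq Finset.univ (fun _ : X => (1:ℝ))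
        (fun x => Real.sqrt (q x))
      simp only [one_mul, one_pow] at h5
      have e2 : ∑ x, Real.sqrt (q x) ^ 2 = 1 := by
        rw [← hq1]
        exact Finset.sum_congr rfl fun x _ => Real.sq_sqrt (hq0 x)
      calc (∑ x, Real.sqrt (q x)) ^ 2 ≤ (∑ _x : X, (1:ℝ)) * ∑ x, Real.sqrt (q x) ^ 2 := h5
        _ = K := by rw [e2, mul_one]; simp [hK]
    have hsq : ∑ x, Real.sqrt (q x) ≤ Real.sqrt K :=
      (Real.le_sqrt (Finset.sum_nonneg fun x _ => Real.sqrt_nonneg _) (le_of_lt hKpos)).2 hCS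
    rw [hsum, div_le_one (Real.sqrt_pos.2 hKpos)]
    exact hsq
  calc ∑ x, q x * Real.exp (μ * (-Real.log (q x) - H))
      ≤ ∑ x, Real.exp (μ * (L - H)) *
          (q x + μ * (q x * V x) + μ^2 * (64 * (q x * Real.exp (V x / 2)) + 2 * L^2 * q x)) :=
        Finset.sum_le_sum fun x _ => key x
    _ = Real.exp (μ * (L - H)) *
          (1 + μ * (H - L) + μ^2 * (64 * (∑ x, q x * Real.exp (V x / 2)) + 2 * L^2)) := by
        rw [← Finset.mul_sum]
        congr 1
        simp only [Finset.sum_add_distrib, ← Finset.mul_sum]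
        rw [hq1, hQV]
        ring
    _ ≤ Real.exp (μ * (L - H)) * (1 + (μ * (H - L) + 200 * μ^2 * L^2)) := by
        refine mul_le_mul_of_nonneg_left ?_ (le_of_lt (Real.exp_pos _))
        have h6 : 64 * (∑ x, q x * Real.exp (V x / 2)) + 2 * L^2 ≤ 200 * L^2 := by
          nlinarith
        have h7 := mul_le_mul_of_nonneg_left h6 (sq_nonneg μ)
        nlinarith [sq_nonneg μ]
    _ ≤ Real.exp (μ * (L - H)) * Real.exp (μ * (H - L) + 200 * μ^2 * L^2) := by
        refine mul_le_mul_of_nonneg_left ?_ (le_of_lt (Real.exp_pos _))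
        linarith [Real.add_one_le_exp (μ * (H - L) + 200 * μ^2 * L^2)]
    _ = Real.exp (200 * μ^2 * L^2) := by
        rw [← Real.exp_add]
        congr 1
        ring

lemma seqProb_nonneg {X : Type} [Fintype X] (pA : List X → X → ℝ)
    (hp : ∀ h : List X, (∀ x, 0 ≤ pA h x) ∧ ∑ x, pA h x = 1) {N : ℕ} (y : Fin N → X) :
    0 ≤ seqProb pA y :=
  Finset.prod_nonneg fun n _ => (hp _).1 _


lemma ofFn_snoc' {X : Type} {N : ℕ} (f : Fin N → X) (x : X) :
    List.ofFn (Fin.snoc f x) = List.ofFn f ++ [x] := by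
  rw [List.ofFn_succ']
  simp only [Fin.snoc_castSucc, Fin.snoc_last, List.concat_eq_append]


lemma take_snoc_castSucc {X : Type} {N : ℕ} (f : Fin N → X) (x : X) (n : Fin N) :
    (List.ofFn (Fin.snoc f x)).take (n.castSucc).val = (List.ofFn f).take n.val := by
  rw [ofFn_snoc']
  exact List.take_append_of_le_length (by simpa using n.isLt.le)


lemma take_snoc_last {X : Type} {N : ℕ} (f : Fin N → X) (x : X) :
    (List.ofFn (Fin.snoc f x)).take (Fin.last N).val = List.ofFn f := by
  rw [ofFn_snoc', show (Fin.last N).val = (List.ofFn f).length from by simp, List.take_left]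


def snocEquiv (X : Type) (N : ℕ) : (Fin N → X) × X ≃ (Fin (N+1) → X) where
  toFun p := Fin.snoc p.1 p.2
  invFun y := (Fin.init y, y (Fin.last N))
  left_inv p := by simp
  right_inv y := by simp


lemma mgf_bound {X : Type} [Fintype X] (pA : List X → X → ℝ)
    (hp : ∀ h : List X, (∀ x, 0 ≤ pA h x) ∧ ∑ x, pA h x = 1) (K2 : 2 ≤ Fintype.card X)
    (μ : ℝ) (hμ : |μ| ≤ 1 / (4 * (1 + Real.log (Fintype.card X)))) :
    ∀ N : ℕ, ∑ y : Fin N → X, seqProb pA y *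
        Real.exp (μ * ∑ n : Fin N, (-Real.log (pA ((List.ofFn y).take n.val) (y n))
          - shannonEntropy (pA ((List.ofFn y).take n.val))))
      ≤ Real.exp (200 * μ^2 * (Real.log (Fintype.card X))^2 * N) := by
  intro N
  induction N with
  | zero => simp [seqProb]
  | succ N ih =>
    rw [show (((N+1:ℕ)):ℝ) = (N:ℝ)+1 by push_cast; ring]
    set L : ℝ := Real.log (Fintype.card X) with hL
    set E : ℝ := Real.exp (200 * μ^2 * L^2) with hE
    have hEpos : 0 < E := Real.exp_pos _
    set F : (Fin (N+1) → X) → ℝ := fun y => seqProb pA y *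
        Real.exp (μ * ∑ n : Fin (N+1), (-Real.log (pA ((List.ofFn y).take n.val) (y n))
          - shannonEntropy (pA ((List.ofFn y).take n.val)))) with hF
    have hre : ∑ y : Fin (N+1) → X, F y = ∑ p : (Fin N → X) × X, F (Fin.snoc p.1 p.2) :=
      (Fintype.sum_equiv (snocEquiv X N) (fun p => F (Fin.snoc p.1 p.2)) F fun p => rfl).symm
    have hsplitF : ∀ (f : Fin N → X) (x : X), F (Fin.snoc f x) =
        (seqProb pA f * Real.exp (μ * ∑ n : Fin N,
          (-Real.log (pA ((List.ofFn f).take n.val) (f n))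
            - shannonEntropy (pA ((List.ofFn f).take n.val))))) *
        (pA (List.ofFn f) x * Real.exp (μ * (-Real.log (pA (List.ofFn f) x)
            - shannonEntropy (pA (List.ofFn f))))) := by
      intro f x
      set y' : Fin (N+1) → X := Fin.snoc f x with hy'
      have h1 : seqProb pA (Fin.snoc f x) = seqProb pA f * pA (List.ofFn f) x := by
        unfold seqProb
        rw [Fin.prod_univ_castSucc]
        congr 1
        · exact Finset.prod_congr rfl fun n _ => by
            rw [take_snoc_castSucc, Fin.snoc_castSucc]
        · rw [take_snoc_last, Fin.snoc_last]
      have h2 : ∑ n : Fin (N+1), (-Real.log (pA ((List.ofFn y').take n.val)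
            (y' n)) - shannonEntropy (pA ((List.ofFn y').take n.val)))
          = (∑ n : Fin N, (-Real.log (pA ((List.ofFn f).take n.val) (f n))
              - shannonEntropy (pA ((List.ofFn f).take n.val))))
            + (-Real.log (pA (List.ofFn f) x) - shannonEntropy (pA (List.ofFn f))) := by
        rw [Fin.sum_univ_castSucc]
        congr 1
        · refine Finset.sum_congr rfl fun n _ => ?_
          rw [hy']
          rw [take_snoc_castSucc, Fin.snoc_castSucc]
        · rw [hy', take_snoc_last, Fin.snoc_last]
      simp only [hF, h1, h2, mul_add, Real.exp_add]
      rw [hy', h1]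
      ring
    calc ∑ y : Fin (N+1) → X, F y = ∑ p : (Fin N → X) × X, F (Fin.snoc p.1 p.2) := hre
      _ = ∑ f : Fin N → X, ∑ x : X, F (Fin.snoc f x) := by rw [Fintype.sum_prod_type]
      _ ≤ ∑ f : Fin N → X, (seqProb pA f * Real.exp (μ * ∑ n : Fin N,
            (-Real.log (pA ((List.ofFn f).take n.val) (f n))
              - shannonEntropy (pA ((List.ofFn f).take n.val))))) * E := by
          refine Finset.sum_le_sum fun f _ => ?_
          have hT : 0 ≤ seqProb pA f * Real.exp (μ * ∑ n : Fin N,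
              (-Real.log (pA ((List.ofFn f).take n.val) (f n))
                - shannonEntropy (pA ((List.ofFn f).take n.val)))) :=
            mul_nonneg (seqProb_nonneg pA hp f) (le_of_lt (Real.exp_pos _))
          have hstep := step_bound (pA (List.ofFn f)) (hp _).1 (hp _).2 K2 μ hμ
          calc ∑ x : X, F (Fin.snoc f x)
              = (seqProb pA f * Real.exp (μ * ∑ n : Fin N,
                  (-Real.log (pA ((List.ofFn f).take n.val) (f n))
                    - shannonEntropy (pA ((List.ofFn f).take n.val))))) *
                ∑ x : X, pA (List.ofFn f) x * Real.exp (μ * (-Real.log (pA (List.ofFn f) x)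
                  - shannonEntropy (pA (List.ofFn f)))) := by
                rw [Finset.mul_sum]
                exact Finset.sum_congr rfl fun x _ => hsplitF f x
            _ ≤ _ := mul_le_mul_of_nonneg_left hstep hT
      _ = (∑ f : Fin N → X, seqProb pA f * Real.exp (μ * ∑ n : Fin N,
            (-Real.log (pA ((List.ofFn f).take n.val) (f n))
              - shannonEntropy (pA ((List.ofFn f).take n.val))))) * E := by
          rw [← Finset.sum_mul]
      _ ≤ Real.exp (200 * μ^2 * L^2 * N) * E := mul_le_mul_of_nonneg_right ih (le_of_lt hEpos)
      _ = Real.exp (200 * μ^2 * L^2 * (N+1)) := by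
          rw [hE, ← Real.exp_add]
          congr 1
          push_cast
          ring

/-- Theorem 1(a): there is a universal constant `c₁ > 0` such that for any
sequential model `A` on a finite alphabet of size `K ≥ 2` and any `t > 0`,
`P(|l_A - h_N(A,A)| ≥ t) ≤ 2 exp(-(N t/(c₁ log K)) min(1, t/(c₁ log K)))`. -/
theorem logPerp_concentration_same_model :
    ∃ c1 : ℝ, 0 < c1 ∧
      ∀ (X : Type) [Fintype X], ∀ (pA : List X → X → ℝ),
        (∀ h : List X, (∀ x, 0 ≤ pA h x) ∧ ∑ x, pA h x = 1) →
        2 ≤ Fintype.card X →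
        ∀ N : ℕ, 0 < N → ∀ t : ℝ, 0 < t →
          (∑ y : Fin N → X,
              if t ≤ |logPerp pA y - avgEntropy pA y| then seqProb pA y else 0)
            ≤ 2 * Real.exp (-(N * t / (c1 * Real.log (Fintype.card X))) *
                min 1 (t / (c1 * Real.log (Fintype.card X)))) := by
  refine ⟨800, by norm_num, ?_⟩
  intro X _ pA hp K2 N hN t ht
  set K : ℝ := (Fintype.card X : ℝ) with hK
  have hK2 : (2:ℝ) ≤ K := by rw [hK]; exact_mod_cast K2
  set L : ℝ := Real.log K with hLdef
  have hlog2 : (0.6931471803 : ℝ) < Real.log 2 := Real.log_two_gt_d9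
  have hL2 : Real.log 2 ≤ L := Real.log_le_log (by norm_num) hK2
  have hL0 : (0.69 : ℝ) < L := by linarith
  have hLpos : 0 < L := by linarith
  have hNpos : (0:ℝ) < N := by exact_mod_cast hN
  have hden : (0:ℝ) < 4 * (1 + L) := by linarith
  set lam : ℝ := min (1 / (4 * (1 + L))) (t / (400 * L^2)) with hlam
  have hlampos : 0 < lam := lt_min (by positivity) (by positivity)
  have hlam1 : lam ≤ 1 / (4 * (1 + L)) := min_le_left _ _
  have hlam2 : lam ≤ t / (400 * L^2) := min_le_right _ _
  have habs : |lam| ≤ 1 / (4 * (1 + L)) := by rw [abs_of_pos hlampos]; exact hlam1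
  have habs' : |(-lam)| ≤ 1 / (4 * (1 + L)) := by rwa [abs_neg]
  have hMGF1 := mgf_bound pA hp K2 lam habs N
  have hMGF2 := mgf_bound pA hp K2 (-lam) habs' N
  -- pointwise Chernoff bound
  have hpoint : ∀ y : Fin N → X,
      (if t ≤ |logPerp pA y - avgEntropy pA y| then seqProb pA y else 0) ≤
        Real.exp (-(lam * (N * t))) *
          (seqProb pA y * Real.exp (lam * ∑ n : Fin N,
              (-Real.log (pA ((List.ofFn y).take n.val) (y n))
                - shannonEntropy (pA ((List.ofFn y).take n.val))))
            + seqProb pA y * Real.exp (-lam * ∑ n : Fin N,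
              (-Real.log (pA ((List.ofFn y).take n.val) (y n))
                - shannonEntropy (pA ((List.ofFn y).take n.val))))) := by
    intro y
    set S : ℝ := ∑ n : Fin N, (-Real.log (pA ((List.ofFn y).take n.val) (y n))
        - shannonEntropy (pA ((List.ofFn y).take n.val))) with hSdef
    have hsp := seqProb_nonneg pA hp y
    have hS : S = N * (logPerp pA y - avgEntropy pA y) := by
      simp only [hSdef, logPerp, avgEntropy, Finset.sum_sub_distrib]
      field_simp
      simp only [Finset.sum_neg_distrib]
    have hrhs : Real.exp (-(lam * (N * t))) *
          (seqProb pA y * Real.exp (lam * S) + seqProb pA y * Real.exp (-lam * S))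
        = seqProb pA y * (Real.exp (-(lam * (N * t))) * Real.exp (lam * S))
          + Real.exp (-(lam * (N * t))) * (seqProb pA y * Real.exp (-lam * S)) := by ring
    split_ifs with hcond
    · rcases le_abs.1 hcond with hD | hD
      · have h1 : (1:ℝ) ≤ Real.exp (-(lam * (N * t))) * Real.exp (lam * S) := by
          rw [← Real.exp_add]
          refine Real.one_le_exp ?_
          have hSt : (N:ℝ) * t ≤ S := by
            rw [hS]
            exact mul_le_mul_of_nonneg_left hD (le_of_lt hNpos)
          nlinarith
        rw [hrhs]
        have h3 : 0 ≤ Real.exp (-(lam * (N * t))) * (seqProb pA y * Real.exp (-lam * S)) :=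
          mul_nonneg (le_of_lt (Real.exp_pos _)) (mul_nonneg hsp (le_of_lt (Real.exp_pos _)))
        nlinarith [mul_le_mul_of_nonneg_left h1 hsp]
      · have h1 : (1:ℝ) ≤ Real.exp (-(lam * (N * t))) * Real.exp (-lam * S) := by
          rw [← Real.exp_add]
          refine Real.one_le_exp ?_
          have hSt : (N:ℝ) * t ≤ -S := by
            rw [hS]
            calc (N:ℝ) * t ≤ N * -(logPerp pA y - avgEntropy pA y) :=
                  mul_le_mul_of_nonneg_left hD (le_of_lt hNpos)
              _ = -(N * (logPerp pA y - avgEntropy pA y)) := by ring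
          nlinarith
        rw [hrhs]
        have h3 : 0 ≤ seqProb pA y * (Real.exp (-(lam * (N * t))) * Real.exp (lam * S)) :=
          mul_nonneg hsp (mul_nonneg (le_of_lt (Real.exp_pos _)) (le_of_lt (Real.exp_pos _)))
        nlinarith [mul_le_mul_of_nonneg_left h1 hsp]
    · positivity
  -- numeric exponent bound
  have hlam2' : lam * (400 * L^2) ≤ t := by
    rw [← le_div_iff₀ (by positivity)]
    exact hlam2
  have hnum : -(lam * (N * t)) + 200 * lam^2 * L^2 * N
      ≤ -(N * t / (800 * L)) * min 1 (t / (800 * L)) := by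
    have h200 : 200 * lam^2 * L^2 ≤ lam * t / 2 := by
      nlinarith [mul_le_mul_of_nonneg_left hlam2' (le_of_lt hlampos)]
    set m : ℝ := min 1 (t / (800 * L)) with hm
    have hm1 : m ≤ 1 := min_le_left _ _
    have hm2 : m ≤ t / (800 * L) := min_le_right _ _
    have hA : m / (800 * L) ≤ (1 / (4 * (1 + L))) / 2 := by
      calc m / (800 * L) ≤ 1 / (800 * L) := by gcongr
        _ ≤ (1 / (4 * (1 + L))) / 2 := by
            rw [div_div, div_le_div_iff₀ (by positivity) (by positivity)]
            nlinarith
    have hB : m / (800 * L) ≤ (t / (400 * L^2)) / 2 := by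
      calc m / (800 * L) ≤ (t / (800 * L)) / (800 * L) := by gcongr
        _ ≤ (t / (400 * L^2)) / 2 := by
            rw [div_div, div_div, div_le_div_iff₀ (by positivity) (by positivity)]
            nlinarith [le_of_lt ht, sq_nonneg L]
    have hmin : m / (800 * L) ≤ lam / 2 := by
      rw [hlam, ← min_div_div_right (by norm_num : (0:ℝ) ≤ 2)]
      exact le_min hA hB
    have hNt : (0:ℝ) < N * t := mul_pos hNpos ht
    have hfinal : N * t / (800 * L) * m ≤ lam * (N * t) / 2 := by
      calc N * t / (800 * L) * m = (N * t) * (m / (800 * L)) := by ring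
        _ ≤ (N * t) * (lam / 2) := mul_le_mul_of_nonneg_left hmin (le_of_lt hNt)
        _ = lam * (N * t) / 2 := by ring
    have h200N : 200 * lam^2 * L^2 * N ≤ (lam * t / 2) * N :=
      mul_le_mul_of_nonneg_right h200 (le_of_lt hNpos)
    nlinarith [hfinal, h200N]
  calc (∑ y : Fin N → X,
          if t ≤ |logPerp pA y - avgEntropy pA y| then seqProb pA y else 0)
      ≤ ∑ y : Fin N → X, Real.exp (-(lam * (N * t))) *
          (seqProb pA y * Real.exp (lam * ∑ n : Fin N,
              (-Real.log (pA ((List.ofFn y).take n.val) (y n))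
                - shannonEntropy (pA ((List.ofFn y).take n.val))))
            + seqProb pA y * Real.exp (-lam * ∑ n : Fin N,
              (-Real.log (pA ((List.ofFn y).take n.val) (y n))
                - shannonEntropy (pA ((List.ofFn y).take n.val))))) :=
        Finset.sum_le_sum fun y _ => hpoint y
    _ = Real.exp (-(lam * (N * t))) *
          ((∑ y : Fin N → X, seqProb pA y * Real.exp (lam * ∑ n : Fin N,
              (-Real.log (pA ((List.ofFn y).take n.val) (y n))
                - shannonEntropy (pA ((List.ofFn y).take n.val)))))
           + ∑ y : Fin N → X, seqProb pA y * Real.exp (-lam * ∑ n : Fin N,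
              (-Real.log (pA ((List.ofFn y).take n.val) (y n))
                - shannonEntropy (pA ((List.ofFn y).take n.val))))) := by
        rw [← Finset.mul_sum, Finset.sum_add_distrib]
    _ ≤ Real.exp (-(lam * (N * t))) *
          (Real.exp (200 * lam^2 * L^2 * N) + Real.exp (200 * (-lam)^2 * L^2 * N)) :=
        mul_le_mul_of_nonneg_left (add_le_add hMGF1 hMGF2) (le_of_lt (Real.exp_pos _))
    _ = 2 * Real.exp (-(lam * (N * t)) + 200 * lam^2 * L^2 * N) := by
        rw [neg_sq, Real.exp_add]
        ring
    _ ≤ 2 * Real.exp (-(N * t / (800 * L)) * min 1 (t / (800 * L))) := by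
        have := Real.exp_le_exp.2 hnum
        linarith
end
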